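/- For all ρ, x ∈ (0,∞) and all r ∈ ℝ, S_ρ(x,−r) = S_ρ(x^{−1}, r)^{−1}; in particular, S_ρ(1,−r) = S_ρ(1,r)^{−1}. -/

import Mathlib

open Real MeasureTheory Filter Set

noncomputable section

/-- `S` is the (unique) solution of the ODE
`S'(u) = -8ρ S(u)^{1+ρ}/(1+S(u)^ρ)²` with `S(0) = x`, valued in `(0,∞)`. -/
def IsSsol (ρ x : ℝ) (S : ℝ → ℝ) : Prop :=
  (∀ u : ℝ, 0 < S u) ∧ S 0 = x ∧
    ∀ u : ℝ, HasDerivAt S (-(8 * ρ * S u ^ (1 + ρ)) / (1 + S u ^ ρ) ^ 2) u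

/-- First integral of the ODE. -/
def Ffun (ρ s : ℝ) : ℝ := (s ^ ρ - s ^ (-ρ)) / ρ + 2 * Real.log s

lemma Ffun_hasDerivAt (ρ : ℝ) (hρ : 0 < ρ) {s : ℝ} (hs : 0 < s) :
    HasDerivAt (Ffun ρ) ((1 + s ^ ρ) ^ 2 / s ^ (1 + ρ)) s := by
  have h1 : HasDerivAt (fun t : ℝ => t ^ ρ) (ρ * s ^ (ρ - 1)) s := by
    simpa using Real.hasDerivAt_rpow_const (p := ρ) (Or.inl hs.ne')
  have h2 : HasDerivAt (fun t : ℝ => t ^ (-ρ)) (-ρ * s ^ (-ρ - 1)) s := by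
    simpa using Real.hasDerivAt_rpow_const (p := -ρ) (Or.inl hs.ne')
  have h3 : HasDerivAt Real.log s⁻¹ s := Real.hasDerivAt_log hs.ne'
  have h : HasDerivAt (Ffun ρ)
      ((ρ * s ^ (ρ - 1) - -ρ * s ^ (-ρ - 1)) / ρ + 2 * s⁻¹) s :=
    ((h1.sub h2).div_const ρ).add (h3.const_mul 2)
  convert h using 1
  have hsρ : (0:ℝ) < s ^ ρ := Real.rpow_pos_of_pos hs ρ
  have e1 : s ^ (ρ - 1) = s ^ ρ / s := by
    rw [Real.rpow_sub hs, Real.rpow_one]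
  have e2 : s ^ (-ρ - 1) = (s ^ ρ * s)⁻¹ := by
    rw [show -ρ - 1 = -(ρ + 1) by ring, Real.rpow_neg hs.le, Real.rpow_add hs,
      Real.rpow_one]
  have e3 : s ^ (1 + ρ) = s * s ^ ρ := by
    rw [Real.rpow_add hs, Real.rpow_one]
  rw [e1, e2, e3]
  field_simp
  ring

lemma Ffun_const (ρ x : ℝ) (hρ : 0 < ρ) (S : ℝ → ℝ) (h : IsSsol ρ x S) (u : ℝ) :
    Ffun ρ (S u) = Ffun ρ x - 8 * ρ * u := by
  obtain ⟨hpos, h0, hS⟩ := h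
  set g : ℝ → ℝ := fun u => Ffun ρ (S u) + 8 * ρ * u with hg
  have hgd : ∀ v : ℝ, HasDerivAt g 0 v := by
    intro v
    have hc : HasDerivAt (fun u => Ffun ρ (S u))
        ((1 + S v ^ ρ) ^ 2 / S v ^ (1 + ρ) *
          (-(8 * ρ * S v ^ (1 + ρ)) / (1 + S v ^ ρ) ^ 2)) v :=
      (Ffun_hasDerivAt ρ hρ (hpos v)).comp v (hS v)
    have hl : HasDerivAt (fun u : ℝ => 8 * ρ * u) (8 * ρ) v := by
      simpa using (hasDerivAt_id v).const_mul (8 * ρ)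
    have := hc.add hl
    refine this.congr_deriv ?_
    have h1 : (0:ℝ) < S v ^ (1 + ρ) := Real.rpow_pos_of_pos (hpos v) _
    have h2 : (0:ℝ) < 1 + S v ^ ρ := by linarith [Real.rpow_pos_of_pos (hpos v) ρ]
    field_simp
    ring
  have hconst : ∀ v : ℝ, g v = g 0 := by
    intro v
    have : ∀ w : ℝ, deriv g w = 0 := fun w => (hgd w).deriv
    exact is_const_of_deriv_eq_zero (fun w => (hgd w).differentiableAt) this v 0
  have h0' := hconst u
  simp only [hg] at h0'
  rw [h0] at h0'
  linarith [h0']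

lemma Ffun_strictMono (ρ : ℝ) (hρ : 0 < ρ) : StrictMonoOn (Ffun ρ) (Ioi 0) := by
  apply strictMonoOn_of_deriv_pos (convex_Ioi 0)
  · intro s hs
    exact (Ffun_hasDerivAt ρ hρ hs).continuousAt.continuousWithinAt
  · intro s hs
    rw [interior_Ioi] at hs
    rw [(Ffun_hasDerivAt ρ hρ hs).deriv]
    have h1 : (0:ℝ) < s ^ (1 + ρ) := Real.rpow_pos_of_pos hs _
    have h2 : (0:ℝ) < 1 + s ^ ρ := by linarith [Real.rpow_pos_of_pos hs ρ]
    positivity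

lemma Ffun_inv (ρ : ℝ) {s : ℝ} (hs : 0 < s) : Ffun ρ s⁻¹ = -Ffun ρ s := by
  unfold Ffun
  rw [Real.inv_rpow hs.le, Real.inv_rpow hs.le, Real.log_inv,
    ← Real.rpow_neg hs.le, ← Real.rpow_neg hs.le, neg_neg]
  ring

theorem stmt9 (ρ : ℝ) (hρ : 0 < ρ) :
    (∀ x : ℝ, 0 < x → ∀ S1 S2 : ℝ → ℝ, IsSsol ρ x S1 → IsSsol ρ x⁻¹ S2 →
      ∀ r : ℝ, S1 (-r) = (S2 r)⁻¹) ∧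
    (∀ S : ℝ → ℝ, IsSsol ρ 1 S → ∀ r : ℝ, S (-r) = (S r)⁻¹) := by
  have main : ∀ x : ℝ, 0 < x → ∀ S1 S2 : ℝ → ℝ, IsSsol ρ x S1 → IsSsol ρ x⁻¹ S2 →
      ∀ r : ℝ, S1 (-r) = (S2 r)⁻¹ := by
    intro x hx S1 S2 h1 h2 r
    have hp1 : 0 < S1 (-r) := h1.1 (-r)
    have hp2 : 0 < S2 r := h2.1 r
    have e1 : Ffun ρ (S1 (-r)) = Ffun ρ x + 8 * ρ * r := by
      have := Ffun_const ρ x hρ S1 h1 (-r); linarith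
    have e2 : Ffun ρ ((S2 r)⁻¹) = Ffun ρ x + 8 * ρ * r := by
      rw [Ffun_inv ρ hp2, Ffun_const ρ x⁻¹ hρ S2 h2 r, Ffun_inv ρ hx]
      ring
    exact (Ffun_strictMono ρ hρ).injOn (mem_Ioi.2 hp1)
      (mem_Ioi.2 (inv_pos.2 hp2)) (e1.trans e2.symm)
  refine ⟨main, fun S hS r => ?_⟩
  exact main 1 one_pos S S hS (by simpa using hS) r

end
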